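/- Let S be an m×k integer matrix with rows S¹,…,Sᵐ ∈ ℤᵏ. Then S satisfies condition (A) for K if and only if the following condition (A*) holds: for every prime p and every nonzero vector a ∈ (ℤ/pℤ)ᵏ there exists a minimal non-simplex ω(a) ∈ N(K) such that ⟨a, Sⁱ mod p⟩ ≠ 0 in ℤ/pℤ for every i ∈ ω(a), where ⟨·,·⟩ denotes the standard bilinear form on (ℤ/pℤ)ᵏ and Sⁱ mod p is the coordinatewise reduction of Sⁱ. -/

import Mathlib

/-- `K` is an abstract simplicial complex on the vertex set `[m]`:
it contains the empty set and is closed under taking subsets. -/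
def IsSimplicialComplex (m : ℕ) (K : Set (Finset (Fin m))) : Prop :=
  ∅ ∈ K ∧ ∀ σ ∈ K, ∀ τ ⊆ σ, τ ∈ K

/-- `ω` is a minimal non-simplex of `K`: `ω ∉ K` but every proper subset of `ω` is in `K`. -/
def MinimalNonSimplex (m : ℕ) (K : Set (Finset (Fin m))) (ω : Finset (Fin m)) : Prop :=
  ω ∉ K ∧ ∀ τ ⊂ ω, τ ∈ K

/-- Condition (A): for every simplex `σ ∈ K` the rows `{Sⁱ : i ∉ σ}`
generate `ℤᵏ` as an abelian group. -/
def CondA (m k : ℕ) (K : Set (Finset (Fin m))) (S : Matrix (Fin m) (Fin k) ℤ) : Prop :=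
  ∀ σ ∈ K, Submodule.span ℤ ((fun i => S i) '' {i : Fin m | i ∉ σ}) = ⊤

/-- Condition (A2): for every simplex `σ ∈ K` the rows `{Sⁱ : i ∉ σ}` span `𝔽₂ᵏ`. -/
def CondA2 (m k : ℕ) (K : Set (Finset (Fin m))) (S : Matrix (Fin m) (Fin k) (ZMod 2)) : Prop :=
  ∀ σ ∈ K, Submodule.span (ZMod 2) ((fun i => S i) '' {i : Fin m | i ∉ σ}) = ⊤


/-- The mod-`p` pairing `v ↦ ∑ j, a j * (v j mod p)` as an integer-linear map. -/
noncomputable def pairL (p k : ℕ) (a : Fin k → ZMod p) : (Fin k → ℤ) →ₗ[ℤ] ZMod p where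
  toFun v := ∑ j, a j * ((v j : ZMod p))
  map_add' v w := by
    simp [mul_add, Finset.sum_add_distrib]
  map_smul' c v := by
    simp only [Pi.smul_apply, smul_eq_mul, RingHom.id_apply, zsmul_eq_mul, Int.cast_mul,
      Finset.mul_sum]
    exact Finset.sum_congr rfl fun j _ => by ring

lemma pairL_single (p k : ℕ) (a : Fin k → ZMod p) (j : Fin k) :
    pairL p k a (Pi.single j 1) = a j := by
  classical
  simp [pairL, Pi.single_apply]

lemma exists_prime_functional {k : ℕ} (M : Submodule ℤ (Fin k → ℤ)) (hM : M ≠ ⊤) :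
    ∃ p : ℕ, p.Prime ∧ ∃ a : Fin k → ZMod p, a ≠ 0 ∧ ∀ v ∈ M, pairL p k a v = 0 := by
  classical
  obtain ⟨n, snf⟩ := M.smithNormalForm (Pi.basisFun ℤ (Fin k))
  suffices h : ∃ p : ℕ, p.Prime ∧ ∃ i₀ : Fin k, ∀ v ∈ M, (p : ℤ) ∣ snf.bM.coord i₀ v by
    obtain ⟨p, hp, i₀, hdvd⟩ := h
    haveI := Fact.mk hp
    set a : Fin k → ZMod p := fun j => ((snf.bM.coord i₀ (Pi.single j 1) : ℤ) : ZMod p) with ha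
    have heq : pairL p k a =
        (LinearMap.toSpanSingleton ℤ (ZMod p) 1).comp (snf.bM.coord i₀) := by
      apply Module.Basis.ext (Pi.basisFun ℤ (Fin k))
      intro j
      simp [pairL_single, ha, LinearMap.toSpanSingleton_apply, Int.smul_one_eq_cast]
    refine ⟨p, hp, a, ?_, ?_⟩
    · intro h0
      have h1 : pairL p k a (snf.bM i₀) = 1 := by
        rw [heq]
        simp [LinearMap.toSpanSingleton_apply, Int.smul_one_eq_cast]
      rw [h0] at h1
      simp [pairL] at h1
    · intro v hv
      rw [heq]
      simp only [LinearMap.comp_apply, LinearMap.toSpanSingleton_apply, Int.smul_one_eq_cast]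
      exact (ZMod.intCast_zmod_eq_zero_iff_dvd _ p).mpr (hdvd v hv)
  by_cases hs : ∀ j : Fin k, ∃ i, snf.f i = j
  · have hnu : ∃ i, ¬ IsUnit (snf.a i) := by
      by_contra hall
      push_neg at hall
      apply hM
      have hmem : ∀ j, snf.bM j ∈ M := by
        intro j
        obtain ⟨i, rfl⟩ := hs j
        obtain ⟨u, hu⟩ := hall i
        have h1 : (snf.bN i : Fin k → ℤ) = snf.a i • snf.bM (snf.f i) := snf.snf i
        have h2 : ((u⁻¹ : ℤˣ) : ℤ) • (snf.bN i : Fin k → ℤ) ∈ M :=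
          M.smul_mem _ (snf.bN i).2
        rwa [h1, ← hu, smul_smul, Units.inv_mul, one_smul] at h2
      rw [eq_top_iff, ← snf.bM.span_eq]
      refine Submodule.span_le.mpr ?_
      rintro _ ⟨j, rfl⟩
      exact hmem j
    obtain ⟨i, hi⟩ := hnu
    have ha0 : snf.a i ≠ 0 := by
      intro h0
      have h1 := snf.snf i
      rw [h0, zero_smul] at h1
      exact snf.bN.ne_zero i (by exact_mod_cast (ZeroMemClass.coe_eq_zero).mp h1)
    obtain ⟨q, hq, hqd⟩ := Int.exists_prime_and_dvd
      (fun h => hi (Int.isUnit_iff_natAbs_eq.mpr h))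
    refine ⟨q.natAbs, Int.prime_iff_natAbs_prime.mp hq, snf.f i, ?_⟩
    intro v hv
    rw [Module.Basis.coord_apply, Int.natAbs_dvd]
    have hrepr := snf.repr_apply_embedding_eq_repr_smul (m := ⟨v, hv⟩) (i := i)
    rw [hrepr, map_smul]
    exact hqd.mul_right _
  · push_neg at hs
    obtain ⟨j, hj⟩ := hs
    refine ⟨2, Nat.prime_two, j, fun v hv => ?_⟩
    have h0 : snf.bM.coord j v = 0 :=
      snf.le_ker_coord_of_notMem_range (by simpa [Set.mem_range] using hj) hv
    simp [h0]

lemma exists_minimal_nonsimplex {m : ℕ} {K : Set (Finset (Fin m))} :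
    ∀ τ : Finset (Fin m), τ ∉ K → ∃ ω, ω ⊆ τ ∧ MinimalNonSimplex m K ω := by
  classical
  intro τ
  induction τ using Finset.strongInduction with
  | _ τ ih =>
    intro hτ
    by_cases h : ∀ τ' ⊂ τ, τ' ∈ K
    · exact ⟨τ, subset_rfl, hτ, h⟩
    · push_neg at h
      obtain ⟨τ', hss, hτ'⟩ := h
      obtain ⟨ω, hsub, hω⟩ := ih τ' hss hτ'
      exact ⟨ω, hsub.trans hss.subset, hω⟩

/-- Condition (A) is equivalent to condition (A*): for every prime `p` and every nonzero
`a ∈ (ℤ/pℤ)ᵏ` there is a minimal non-simplex `ω(a) ∈ N(K)` with `⟨a, Sⁱ mod p⟩ ≠ 0`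
for all `i ∈ ω(a)`. -/
theorem stmt_7 (m k : ℕ) (K : Set (Finset (Fin m))) (hK : IsSimplicialComplex m K)
    (S : Matrix (Fin m) (Fin k) ℤ) :
    CondA m k K S ↔
      ∀ p : ℕ, p.Prime → ∀ a : Fin k → ZMod p, a ≠ 0 →
        ∃ ω : Finset (Fin m), MinimalNonSimplex m K ω ∧
          ∀ i ∈ ω, (∑ j, a j * ((S i j : ZMod p))) ≠ 0 := by
  classical
  constructor
  · intro hA p hp a ha
    haveI := Fact.mk hp
    set σ' : Finset (Fin m) := Finset.univ.filter (fun i => pairL p k a (S i) ≠ 0) with hσ'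
    have hσK : σ' ∉ K := by
      intro hmem
      have hspan := hA σ' hmem
      have hle : Submodule.span ℤ ((fun i => S i) '' {i : Fin m | i ∉ σ'}) ≤
          LinearMap.ker (pairL p k a) := by
        refine Submodule.span_le.mpr ?_
        rintro _ ⟨i, hi, rfl⟩
        have h0 : pairL p k a (S i) = 0 := by
          by_contra hne
          exact hi (Finset.mem_filter.mpr ⟨Finset.mem_univ i, hne⟩)
        simpa [LinearMap.mem_ker] using h0
      rw [hspan] at hle
      apply ha
      funext j
      have hj := hle (Submodule.mem_top (x := Pi.single j 1))
      rw [LinearMap.mem_ker, pairL_single] at hj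
      simpa using hj
    obtain ⟨ω, hsub, hω⟩ := exists_minimal_nonsimplex σ' hσK
    refine ⟨ω, hω, fun i hi => ?_⟩
    have hmem := hsub hi
    rw [hσ', Finset.mem_filter] at hmem
    simpa [pairL] using hmem.2
  · intro hcond σ hσ
    by_contra hM
    obtain ⟨p, hp, a, ha, hvan⟩ := exists_prime_functional _ hM
    obtain ⟨ω, hω, hpair⟩ := hcond p hp a ha
    have hsub : ω ⊆ σ := by
      intro i hi
      by_contra hiσ
      have hmem : S i ∈ Submodule.span ℤ ((fun i => S i) '' {i : Fin m | i ∉ σ}) :=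
        Submodule.subset_span ⟨i, hiσ, rfl⟩
      exact hpair i hi (by simpa [pairL] using hvan _ hmem)
    exact hω.1 (hK.2 σ hσ ω hsub)
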